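/- For n ≥ 1, the number of overpartitions π of n with at least one non-overlined part such that ℓ_{O<N}(π) is even, minus the number with ℓ_{O<N}(π) odd, equals H(n), the number of overpartitions λ of n with at least one non-overlined part such that all non-overlined parts of λ are equal and every overlined part of λ has size ≥ that common non-overlined part size. Here ℓ_{O<N}(π) is the number of overlined parts of π of size strictly less than the largest non-overlined part of π. -/

import Mathlib

open scoped Classical

/-- An overpartition of `n`: a finite set of overlined part sizes (the first
occurrence of a size may be overlined, so overlined parts are distinct)
together with a multiset of non-overlined parts, all parts positive,
with total sum `n`. -/
structure Overpartition (n : ℕ) where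
  overl : Finset ℕ
  plain : Multiset ℕ
  over_pos : ∀ x ∈ overl, 0 < x
  plain_pos : ∀ x ∈ plain, 0 < x
  sum_eq : (∑ x ∈ overl, x) + plain.sum = n

namespace Overpartition

variable {n : ℕ}

theorem ext' {π σ : Overpartition n} (h1 : π.overl = σ.overl) (h2 : π.plain = σ.plain) :
    π = σ := by
  cases π; cases σ; simp_all

instance : Finite (Overpartition n) := by
  classical
  set L : Multiset ℕ := (n + 1) • (Finset.range (n + 1)).val with hL
  have hfin : Finite {s : Multiset ℕ // s ≤ L} := by
    have h : Set.Finite {s : Multiset ℕ | s ≤ L} :=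
      Set.Finite.ofFinset L.powerset.toFinset
        (by intro x; simp [Multiset.mem_powerset])
    exact h.to_subtype
  have hcountL : ∀ x : ℕ, x ≤ n → n + 1 ≤ L.count x := by
    intro x hx
    rw [hL, Multiset.count_nsmul]
    have hpos : 0 < (Finset.range (n + 1)).val.count x :=
      Multiset.count_pos.mpr (by rw [Finset.mem_val]; exact Finset.mem_range.mpr (Nat.lt_succ_of_le hx))
    calc n + 1 = (n + 1) * 1 := (mul_one _).symm
      _ ≤ (n + 1) * (Finset.range (n + 1)).val.count x := Nat.mul_le_mul_left _ hpos
  have key : ∀ π : Overpartition n, π.overl.val ≤ L ∧ π.plain ≤ L := by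
    intro π
    have hsum := π.sum_eq
    constructor
    · rw [Multiset.le_iff_count]
      intro x
      by_cases hx : x ∈ π.overl
      · have hxn : x ≤ n := by
          have h1 : x ≤ ∑ y ∈ π.overl, y :=
            Finset.single_le_sum (f := fun i => i) (fun i _ => Nat.zero_le i) hx
          omega
        have h1 : π.overl.val.count x ≤ 1 :=
          (Multiset.nodup_iff_count_le_one.mp π.overl.nodup) x
        have h2 := hcountL x hxn
        omega
      · have : π.overl.val.count x = 0 := by
          simpa [Multiset.count_eq_zero] using hx
        omega
    · rw [Multiset.le_iff_count]
      intro x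
      by_cases hx : x ∈ π.plain
      · have hxn : x ≤ n := by
          have h1 : x ≤ π.plain.sum :=
            Multiset.single_le_sum (fun y _ => Nat.zero_le y) x hx
          omega
        have hcard : Multiset.card π.plain ≤ π.plain.sum := by
          have := Multiset.card_nsmul_le_sum (s := π.plain) (a := 1)
            (fun y hy => π.plain_pos y hy)
          simpa using this
        have h1 : π.plain.count x ≤ Multiset.card π.plain := Multiset.count_le_card x _
        have h2 := hcountL x hxn
        omega
      · have : π.plain.count x = 0 := by
          simpa [Multiset.count_eq_zero] using hx
        omega
  refine Finite.of_injective
    (fun π : Overpartition n =>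
      ((⟨π.overl.val, (key π).1⟩ : {s : Multiset ℕ // s ≤ L}),
        (⟨π.plain, (key π).2⟩ : {s : Multiset ℕ // s ≤ L}))) ?_
  intro a b hab
  simp only [Prod.mk.injEq, Subtype.mk.injEq] at hab
  exact ext' (Finset.val_inj.mp hab.1) hab.2

/-- The largest plain part (0 if none). -/
def N (π : Overpartition n) : ℕ := π.plain.toFinset.sup id

/-- The set of all part sizes occurring. -/
def U (π : Overpartition n) : Finset ℕ := π.overl ∪ π.plain.toFinset

/-- The part sizes smaller than the largest plain part. -/
def B (π : Overpartition n) : Finset ℕ := π.U.filter (· < π.N)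

/-- The largest part size smaller than the largest plain part. -/
def m (π : Overpartition n) : ℕ := π.B.sup id

noncomputable def ell (π : Overpartition n) : ℕ :=
  (π.overl.filter (fun x => ∃ y ∈ π.plain, x < y)).card

def Fx (π : Overpartition n) : Prop :=
  (∀ x ∈ π.plain, ∀ y ∈ π.plain, x = y) ∧ (∀ x ∈ π.overl, ∀ y ∈ π.plain, y ≤ x)

variable (π : Overpartition n)

lemma le_N {y : ℕ} (hy : y ∈ π.plain) : y ≤ π.N :=
  Finset.le_sup (f := id) (Multiset.mem_toFinset.mpr hy)

lemma N_mem (h0 : π.plain ≠ 0) : π.N ∈ π.plain := by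
  have hne : π.plain.toFinset.Nonempty := by
    rw [Multiset.toFinset_nonempty]; exact h0
  obtain ⟨b, hb, hbe⟩ := Finset.exists_mem_eq_sup π.plain.toFinset hne id
  rw [N, hbe]; exact Multiset.mem_toFinset.mp hb

lemma m_mem (hB : π.B.Nonempty) : π.m ∈ π.B := by
  obtain ⟨b, hb, hbe⟩ := Finset.exists_mem_eq_sup _ hB id
  rw [m, hbe]; exact hb

lemma m_lt_N (hB : π.B.Nonempty) : π.m < π.N := (Finset.mem_filter.mp (π.m_mem hB)).2

lemma m_mem_U (hB : π.B.Nonempty) : π.m ∈ π.U := (Finset.mem_filter.mp (π.m_mem hB)).1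

lemma m_plain (hB : π.B.Nonempty) (hm : π.m ∉ π.overl) : π.m ∈ π.plain := by
  rcases Finset.mem_union.mp (π.m_mem_U hB) with h | h
  · exact absurd h hm
  · exact Multiset.mem_toFinset.mp h

lemma filter_eq (h0 : π.plain ≠ 0) :
    (π.overl.filter fun x => ∃ y ∈ π.plain, x < y) = π.overl.filter (fun x => x < π.N) := by
  apply Finset.filter_congr
  intro x _
  constructor
  · rintro ⟨y, hy, hxy⟩; exact lt_of_lt_of_le hxy (π.le_N hy)
  · intro hx; exact ⟨π.N, π.N_mem h0, hx⟩

noncomputable def iota (π : Overpartition n) : Overpartition n :=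
  if hB : π.B.Nonempty then
    if hm : π.m ∈ π.overl then
      { overl := π.overl.erase π.m
        plain := π.plain + {π.m}
        over_pos := fun x hx => π.over_pos x (Finset.mem_of_mem_erase hx)
        plain_pos := by
          intro x hx
          rcases Multiset.mem_add.mp hx with h | h
          · exact π.plain_pos x h
          · rw [Multiset.mem_singleton.mp h]; exact π.over_pos _ hm
        sum_eq := by
          have h1 : π.m + ∑ x ∈ π.overl.erase π.m, x = ∑ x ∈ π.overl, x :=
            Finset.add_sum_erase _ (fun i => i) hm
          have h2 := π.sum_eq
          rw [Multiset.sum_add, Multiset.sum_singleton]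
          omega }
    else
      { overl := insert π.m π.overl
        plain := π.plain.erase π.m
        over_pos := by
          intro x hx
          rcases Finset.mem_insert.mp hx with h | h
          · subst h
            exact π.plain_pos _ (π.m_plain hB hm)
          · exact π.over_pos _ h
        plain_pos := fun x hx => π.plain_pos x (Multiset.mem_of_mem_erase hx)
        sum_eq := by
          have hmp : π.m ∈ π.plain := π.m_plain hB hm
          have h1 : π.m + (π.plain.erase π.m).sum = π.plain.sum := by
            conv_rhs => rw [← Multiset.cons_erase hmp]
            rw [Multiset.sum_cons]
          have h2 : ∑ x ∈ insert π.m π.overl, x = π.m + ∑ x ∈ π.overl, x :=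
            Finset.sum_insert hm
          have h3 := π.sum_eq
          omega }
  else π

lemma iota_spec (hB : π.B.Nonempty) :
    (π.m ∈ π.overl ∧ (iota π).overl = π.overl.erase π.m ∧ (iota π).plain = π.plain + {π.m}) ∨
    (π.m ∉ π.overl ∧ π.m ∈ π.plain ∧ (iota π).overl = insert π.m π.overl ∧
      (iota π).plain = π.plain.erase π.m) := by
  by_cases hm : π.m ∈ π.overl
  · left
    refine ⟨hm, ?_, ?_⟩ <;> simp [iota, hB, hm]
  · right
    refine ⟨hm, π.m_plain hB hm, ?_, ?_⟩ <;> simp [iota, hB, hm]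

lemma iota_plain_ne (h0 : π.plain ≠ 0) (hB : π.B.Nonempty) : (iota π).plain ≠ 0 := by
  rcases π.iota_spec hB with ⟨_, _, hp⟩ | ⟨_, hmp, _, hp⟩
  · rw [hp]; simp
  · rw [hp]
    intro hcon
    have hN : π.N ∈ π.plain.erase π.m :=
      (Multiset.mem_erase_of_ne (π.m_lt_N hB).ne').mpr (π.N_mem h0)
    rw [hcon] at hN
    simp at hN

lemma U_iota (hB : π.B.Nonempty) : (iota π).U = π.U := by
  rcases π.iota_spec hB with ⟨hm, ho, hp⟩ | ⟨hm, hmp, ho, hp⟩ <;> ext x <;>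
    by_cases hx : x = π.m
  · subst hx
    simp [U, ho, hp, hm, Multiset.mem_toFinset]
  · simp only [U, ho, hp, Finset.mem_union, Finset.mem_erase, Multiset.mem_toFinset,
      Multiset.toFinset_add, Multiset.toFinset_singleton, Multiset.mem_add,
      Multiset.mem_singleton, Finset.mem_singleton, hx]
    tauto
  · subst hx
    simp [U, ho, hp, hmp, Multiset.mem_toFinset]
  · simp only [U, ho, hp, Finset.mem_union, Finset.mem_insert, Multiset.mem_toFinset,
      Multiset.mem_erase_of_ne hx, hx]
    tauto

lemma N_iota (h0 : π.plain ≠ 0) (hB : π.B.Nonempty) : (iota π).N = π.N := by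
  rcases π.iota_spec hB with ⟨hm, ho, hp⟩ | ⟨hm, hmp, ho, hp⟩
  · show ((iota π).plain).toFinset.sup id = π.N
    rw [hp, Multiset.toFinset_add, Multiset.toFinset_singleton, Finset.sup_union,
      Finset.sup_singleton]
    exact sup_eq_left.mpr (le_of_lt (π.m_lt_N hB))
  · apply le_antisymm
    · show ((iota π).plain).toFinset.sup id ≤ π.N
      apply Finset.sup_le
      intro b hb
      rw [hp] at hb
      exact π.le_N (Multiset.mem_of_mem_erase (Multiset.mem_toFinset.mp hb))
    · apply Finset.le_sup (f := id)
      rw [hp, Multiset.mem_toFinset]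
      exact (Multiset.mem_erase_of_ne (π.m_lt_N hB).ne').mpr (π.N_mem h0)

lemma B_iota (h0 : π.plain ≠ 0) (hB : π.B.Nonempty) : (iota π).B = π.B := by
  rw [B, B, U_iota _ hB, N_iota _ h0 hB]

lemma m_iota (h0 : π.plain ≠ 0) (hB : π.B.Nonempty) : (iota π).m = π.m := by
  rw [m, m, B_iota _ h0 hB]

lemma iota_iota (h0 : π.plain ≠ 0) (hB : π.B.Nonempty) : iota (iota π) = π := by
  have hB' : (iota π).B.Nonempty := by rw [B_iota _ h0 hB]; exact hB
  have hm' := m_iota π h0 hB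
  rcases π.iota_spec hB with ⟨hm, ho, hp⟩ | ⟨hm, hmp, ho, hp⟩
  · have hnot : (iota π).m ∉ (iota π).overl := by
      rw [hm', ho]; exact Finset.notMem_erase _ _
    rcases (iota π).iota_spec hB' with ⟨h1, _, _⟩ | ⟨_, _, ho2, hp2⟩
    · exact absurd h1 hnot
    · apply ext'
      · rw [ho2, hm', ho, Finset.insert_erase hm]
      · rw [hp2, hm', hp, add_comm, Multiset.singleton_add, Multiset.erase_cons_head]
  · have hyes : (iota π).m ∈ (iota π).overl := by
      rw [hm', ho]; exact Finset.mem_insert_self _ _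
    rcases (iota π).iota_spec hB' with ⟨_, ho2, hp2⟩ | ⟨h1, _, _⟩
    · apply ext'
      · rw [ho2, hm', ho, Finset.erase_insert hm]
      · rw [hp2, hm', hp, add_comm, Multiset.singleton_add, Multiset.cons_erase hmp]
    · exact absurd hyes h1

lemma ell_iota (h0 : π.plain ≠ 0) (hB : π.B.Nonempty) :
    (iota π).ell + 1 = π.ell ∨ π.ell + 1 = (iota π).ell := by
  have h0' := π.iota_plain_ne h0 hB
  have hmN := π.m_lt_N hB
  rw [ell, ell, filter_eq _ h0, filter_eq _ h0', N_iota _ h0 hB]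
  rcases π.iota_spec hB with ⟨hm, ho, hp⟩ | ⟨hm, hmp, ho, hp⟩
  · left
    rw [ho, Finset.filter_erase]
    have hmem : π.m ∈ π.overl.filter (fun x => x < π.N) := Finset.mem_filter.mpr ⟨hm, hmN⟩
    rw [Finset.card_erase_of_mem hmem]
    have hpos : 0 < (π.overl.filter (fun x => x < π.N)).card := Finset.card_pos.mpr ⟨π.m, hmem⟩
    omega
  · right
    rw [ho, Finset.filter_insert, if_pos hmN,
      Finset.card_insert_of_notMem (fun hc => hm (Finset.mem_filter.mp hc).1)]

lemma ell_eq_zero (hF : π.Fx) : π.ell = 0 := by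
  rw [ell, Finset.card_eq_zero, Finset.filter_eq_empty_iff]
  rintro x hx ⟨y, hy, hxy⟩
  exact absurd (hF.2 x hx y hy) (not_le.mpr hxy)

lemma B_nonempty_of_not_fix (h0 : π.plain ≠ 0) (hnF : ¬ π.Fx) : π.B.Nonempty := by
  by_contra hB
  rw [Finset.not_nonempty_iff_eq_empty] at hB
  apply hnF
  have hNe := π.N_mem h0
  have hplain : ∀ x ∈ π.plain, x = π.N := by
    intro x hx
    rcases lt_or_eq_of_le (π.le_N hx) with h | h
    · exfalso
      have : x ∈ π.B := Finset.mem_filter.mpr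
        ⟨Finset.mem_union_right _ (Multiset.mem_toFinset.mpr hx), h⟩
      rw [hB] at this; simp at this
    · exact h
  constructor
  · intro x hx y hy
    rw [hplain x hx, hplain y hy]
  · intro x hx y hy
    by_contra hc
    push_neg at hc
    have hxN : x < π.N := lt_of_lt_of_le hc (π.le_N hy)
    have : x ∈ π.B := Finset.mem_filter.mpr ⟨Finset.mem_union_left _ hx, hxN⟩
    rw [hB] at this; simp at this

lemma not_fix_of_B (h0 : π.plain ≠ 0) (hB : π.B.Nonempty) : ¬ π.Fx := by
  intro hF
  have hmN := π.m_lt_N hB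
  have hNe := π.N_mem h0
  rcases Finset.mem_union.mp (π.m_mem_U hB) with h | h
  · exact absurd (hF.2 _ h _ hNe) (not_le.mpr hmN)
  · exact absurd (hF.1 _ (Multiset.mem_toFinset.mp h) _ hNe) (ne_of_lt hmN)

lemma B_of_odd (h0 : π.plain ≠ 0) (hodd : Odd π.ell) : π.B.Nonempty := by
  have hne : π.ell ≠ 0 := by
    intro h; rw [h] at hodd; simp at hodd
  have hfil : (π.overl.filter fun x => ∃ y ∈ π.plain, x < y).Nonempty := by
    rw [← Finset.card_pos]
    rw [ell] at hne
    omega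
  obtain ⟨x, hx⟩ := hfil
  obtain ⟨hxo, y, hy, hxy⟩ := Finset.mem_filter.mp hx
  exact ⟨x, Finset.mem_filter.mpr
    ⟨Finset.mem_union_left _ hxo, lt_of_lt_of_le hxy (π.le_N hy)⟩⟩

end Overpartition

open Overpartition in
theorem stmt_10 (n : ℕ) (hn : 1 ≤ n) :
    (Nat.card {π : Overpartition n // π.plain ≠ 0 ∧
        Even ((π.overl.filter (fun x => ∃ y ∈ π.plain, x < y)).card)} : ℤ) -
      Nat.card {π : Overpartition n // π.plain ≠ 0 ∧
        Odd ((π.overl.filter (fun x => ∃ y ∈ π.plain, x < y)).card)} =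
    Nat.card {lam : Overpartition n // lam.plain ≠ 0 ∧
        (∀ x ∈ lam.plain, ∀ y ∈ lam.plain, x = y) ∧
        (∀ x ∈ lam.overl, ∀ y ∈ lam.plain, y ≤ x)} := by
  classical
  set E : Set (Overpartition n) := {π | π.plain ≠ 0 ∧
      Even ((π.overl.filter (fun x => ∃ y ∈ π.plain, x < y)).card)} with hE
  set O : Set (Overpartition n) := {π | π.plain ≠ 0 ∧
      Odd ((π.overl.filter (fun x => ∃ y ∈ π.plain, x < y)).card)} with hO
  set F : Set (Overpartition n) := {π | π.plain ≠ 0 ∧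
      (∀ x ∈ π.plain, ∀ y ∈ π.plain, x = y) ∧
      (∀ x ∈ π.overl, ∀ y ∈ π.plain, y ≤ x)} with hF
  suffices h : (E.ncard : ℤ) - O.ncard = F.ncard by
    rw [← Nat.card_coe_set_eq, ← Nat.card_coe_set_eq, ← Nat.card_coe_set_eq] at h
    exact h
  have hFsub : F ⊆ E := by
    intro π hπ
    simp only [hE, hF, Set.mem_setOf_eq] at *
    obtain ⟨h0, hfx⟩ := hπ
    refine ⟨h0, ?_⟩
    have h : (π.overl.filter (fun x => ∃ y ∈ π.plain, x < y)).card = 0 := π.ell_eq_zero hfx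
    rw [h]
    exact Even.zero
  have himg : iota '' (E \ F) = O := by
    ext b
    simp only [hE, hO, hF, Set.mem_image, Set.mem_diff, Set.mem_setOf_eq, not_and]
    constructor
    · rintro ⟨a, ⟨⟨h0, heven⟩, hnF⟩, rfl⟩
      have hB := a.B_nonempty_of_not_fix h0 (fun h => hnF h0 h.1 h.2)
      refine ⟨a.iota_plain_ne h0 hB, ?_⟩
      have heven' : Even a.ell := heven
      have hodd : Odd (iota a).ell := by
        rw [Nat.odd_iff]
        rw [Nat.even_iff] at heven'
        rcases a.ell_iota h0 hB with h | h <;> omega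
      exact hodd
    · rintro ⟨h0, hodd⟩
      have hodd' : Odd b.ell := hodd
      have hB := b.B_of_odd h0 hodd'
      have h0' := b.iota_plain_ne h0 hB
      have hB' : (iota b).B.Nonempty := by rw [B_iota _ h0 hB]; exact hB
      refine ⟨iota b, ⟨⟨h0', ?_⟩, ?_⟩, b.iota_iota h0 hB⟩
      · have heven : Even (iota b).ell := by
          rw [Nat.even_iff]
          rw [Nat.odd_iff] at hodd'
          rcases b.ell_iota h0 hB with h | h <;> omega
        exact heven
      · intro _ h1 h2
        exact (iota b).not_fix_of_B h0' hB' ⟨h1, h2⟩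
  have hinj : Set.InjOn iota (E \ F) := by
    intro a ha b hb hab
    simp only [hE, hF, Set.mem_diff, Set.mem_setOf_eq, not_and] at ha hb
    obtain ⟨⟨ha0, _⟩, hanF⟩ := ha
    obtain ⟨⟨hb0, _⟩, hbnF⟩ := hb
    have haB := a.B_nonempty_of_not_fix ha0 (fun h => hanF ha0 h.1 h.2)
    have hbB := b.B_nonempty_of_not_fix hb0 (fun h => hbnF hb0 h.1 h.2)
    calc a = iota (iota a) := (a.iota_iota ha0 haB).symm
      _ = iota (iota b) := by rw [hab]
      _ = b := b.iota_iota hb0 hbB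
  have hcard1 : (E \ F).ncard = O.ncard := by
    rw [← himg, Set.ncard_image_of_injOn hinj]
  have hcard2 : (E \ F).ncard + F.ncard = E.ncard :=
    Set.ncard_diff_add_ncard_of_subset hFsub (Set.toFinite E)
  omega
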